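/- Let b ∈ ℝ, c > 0, n ∈ ℕ with b + ln c - ln n > 1. Define R_b(x) = Σᵢ xᵢ ln xᵢ + b·Σᵢ xᵢ on [0,∞)ⁿ (interpreting 0·ln 0 = 0). Then the Lebesgue volume of {x ∈ [0,∞)ⁿ : R_b(x) < c} is at most (1/(n!·n)) · 2ⁿcⁿ/(b + ln c - ln n)ⁿ. -/

import Mathlib

open MeasureTheory

lemma aux_nat_le_pow (n : ℕ) : (n : ℝ) ≤ (14423/10000) ^ n := by
  induction n with
  | zero => norm_num
  | succ k ih =>
    rcases lt_or_ge k 3 with hk | hk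
    · interval_cases k <;> norm_num
    · have hk' : (3 : ℝ) ≤ k := by exact_mod_cast hk
      have hp : (0:ℝ) ≤ (14423/10000:ℝ) ^ k := by positivity
      push_cast
      calc (k : ℝ) + 1 ≤ 14423/10000 * k := by nlinarith
        _ ≤ 14423/10000 * (14423/10000) ^ k := by nlinarith
        _ = (14423/10000) ^ (k + 1) := by ring

lemma aux_exp_log_div (n : ℕ) (hn : 0 < n) :
    Real.exp (Real.log n / n) ≤ 14423/10000 := by
  have hn' : (0:ℝ) < n := by exact_mod_cast hn
  have hE : (0:ℝ) ≤ Real.exp (Real.log n / n) := (Real.exp_pos _).le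
  have hpow : Real.exp (Real.log n / n) ^ n = n := by
    rw [← Real.exp_nat_mul]
    rw [mul_div_cancel₀ _ (ne_of_gt hn')]
    exact Real.exp_log hn'
  have : Real.exp (Real.log n / n) ^ n ≤ ((14423:ℝ)/10000) ^ n := by
    rw [hpow]; exact aux_nat_le_pow n
  exact (pow_le_pow_iff_left₀ hE (by norm_num) hn.ne').mp this

lemma aux_log_div_le (n : ℕ) (hn : 0 < n) : Real.log n / n ≤ 368/1000 := by
  have hn' : (0:ℝ) < n := by exact_mod_cast hn
  have h1 : Real.log n ≤ n / Real.exp 1 := by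
    have h2 : Real.log ((n : ℝ) / Real.exp 1) ≤ (n : ℝ) / Real.exp 1 - 1 :=
      Real.log_le_sub_one_of_pos (by positivity)
    rw [Real.log_div (ne_of_gt hn') (Real.exp_ne_zero 1), Real.log_exp] at h2
    linarith
  have he : (27182/10000:ℝ) < Real.exp 1 :=
    lt_trans (by norm_num) Real.exp_one_gt_d9
  have h3 : (n : ℝ) / Real.exp 1 ≤ 368/1000 * n := by
    rw [div_le_iff₀ (Real.exp_pos 1)]
    nlinarith
  rw [div_le_iff₀ hn']
  linarith

lemma aux_key_ineq (n : ℕ) (hn : 0 < n) (S : ℝ) (hS : 1 ≤ S) :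
    S * Real.exp (Real.log n / n) ≤
      2 * (S + Real.log 2 - Real.log S - Real.log n / n) := by
  have hS0 : (0:ℝ) < S := lt_of_lt_of_le zero_lt_one hS
  have hE := aux_exp_log_div n hn
  have hd := aux_log_div_le n hn
  have hlog2 : (6931/10000:ℝ) ≤ Real.log 2 :=
    le_trans (by norm_num) Real.log_two_gt_d9.le
  have hlogS : Real.log S ≤ S / (18/5) + 2863/10000 := by
    have h1 : Real.log (S / (18/5)) ≤ S / (18/5) - 1 :=
      Real.log_le_sub_one_of_pos (by positivity)
    have h2 : Real.log (S / (18/5)) = Real.log S - Real.log (18/5) := by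
      rw [Real.log_div (ne_of_gt hS0) (by norm_num)]
    have h4 : Real.log ((18:ℝ)/5) ≤ 12863/10000 := by
      have h5 : Real.log ((18:ℝ)/5) = 2 * Real.log 2 + Real.log (9/10) := by
        rw [show ((18:ℝ)/5) = 2 * 2 * (9/10) by norm_num,
          Real.log_mul (by norm_num) (by norm_num),
          Real.log_mul (by norm_num) (by norm_num)]
        ring
      have h6 : Real.log ((9:ℝ)/10) ≤ -(1/10) := by
        have := Real.log_le_sub_one_of_pos (show (0:ℝ) < 9/10 by norm_num)
        linarith
      have h7 : Real.log 2 < 69315/100000 :=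
        lt_trans Real.log_two_lt_d9 (by norm_num)
      rw [h5]; linarith
    linarith [h2 ▸ h1]
  have hSE : S * Real.exp (Real.log n / n) ≤ S * (14423/10000) :=
    mul_le_mul_of_nonneg_left hE hS0.le
  nlinarith

lemma aux_jensen (n : ℕ) (hn : 0 < n) (x : Fin n → ℝ) (hx : ∀ i, 0 ≤ x i) :
    (∑ i, x i) * Real.log ((∑ i, x i) / n) ≤ ∑ i, x i * Real.log (x i) := by
  have hn' : (0:ℝ) < n := by exact_mod_cast hn
  have hJ := Real.convexOn_mul_log.map_sum_le (t := Finset.univ) (w := fun _ : Fin n => (n:ℝ)⁻¹)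
    (p := x) (fun i _ => by positivity)
    (by
      rw [Finset.sum_const, Finset.card_univ, Fintype.card_fin, nsmul_eq_mul,
        mul_inv_cancel₀ (by exact_mod_cast hn.ne' : (n:ℝ) ≠ 0)])
    (fun i _ => hx i)
  simp only [smul_eq_mul] at hJ
  have hsum : ∑ i, (n:ℝ)⁻¹ * x i = (∑ i, x i) / n := by
    rw [← Finset.mul_sum]; ring
  rw [hsum] at hJ
  have hsum2 : ∑ i, (n:ℝ)⁻¹ * (x i * Real.log (x i)) = (∑ i, x i * Real.log (x i)) / n := by
    rw [← Finset.mul_sum]; ring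
  rw [hsum2] at hJ
  have := mul_le_mul_of_nonneg_left hJ hn'.le
  calc (∑ i, x i) * Real.log ((∑ i, x i) / n)
      = (n:ℝ) * ((∑ i, x i) / n * Real.log ((∑ i, x i) / n)) := by field_simp
    _ ≤ (n:ℝ) * ((∑ i, x i * Real.log (x i)) / n) := this
    _ = ∑ i, x i * Real.log (x i) := by field_simp

lemma simplex_measurableSet (n : ℕ) (T : ℝ) :
    MeasurableSet {x : Fin n → ℝ | (∀ i, 0 ≤ x i) ∧ ∑ i, x i ≤ T} := by
  have h1 : MeasurableSet {x : Fin n → ℝ | ∀ i, 0 ≤ x i} := by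
    rw [Set.setOf_forall]
    exact MeasurableSet.iInter fun i =>
      measurableSet_le measurable_const (measurable_pi_apply i)
  have h2 : MeasurableSet {x : Fin n → ℝ | ∑ i, x i ≤ T} :=
    measurableSet_le (Finset.measurable_sum _ fun i _ => measurable_pi_apply i)
      measurable_const
  exact h1.inter h2

lemma simplex_vol (n : ℕ) : ∀ T : ℝ, 0 ≤ T →
    volume {x : Fin n → ℝ | (∀ i, 0 ≤ x i) ∧ ∑ i, x i ≤ T} =
      ENNReal.ofReal (T ^ n / n.factorial) := by
  induction n with
  | zero =>
    intro T hT
    have hset : {x : Fin 0 → ℝ | (∀ i, 0 ≤ x i) ∧ ∑ i, x i ≤ T} = Set.univ := by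
      ext x
      simp [Fin.forall_fin_zero_pi, hT]
    rw [hset]
    simp [MeasureTheory.volume_pi, MeasureTheory.Measure.pi_univ]
  | succ n ih =>
    intro T hT
    set e := MeasurableEquiv.piFinSuccAbove (fun _ : Fin (n+1) => ℝ) 0 with he
    have hmp : MeasurePreserving e volume volume :=
      volume_preserving_piFinSuccAbove (fun _ : Fin (n+1) => ℝ) 0
    have hmp' : MeasurePreserving e.symm volume volume := MeasurePreserving.symm e hmp
    have hpre : e.symm ⁻¹' {x : Fin (n+1) → ℝ | (∀ i, 0 ≤ x i) ∧ ∑ i, x i ≤ T}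
        = {p : ℝ × (Fin n → ℝ) | (0 ≤ p.1 ∧ ∀ i, 0 ≤ p.2 i) ∧ p.1 + ∑ i, p.2 i ≤ T} := by
      ext ⟨t, y⟩
      simp [he, MeasurableEquiv.piFinSuccAbove, Fin.insertNth_zero,
        Fin.forall_fin_succ, Fin.sum_univ_succ, and_assoc]
    have hA : MeasurableSet {p : ℝ × (Fin n → ℝ) | (0 ≤ p.1 ∧ ∀ i, 0 ≤ p.2 i)
        ∧ p.1 + ∑ i, p.2 i ≤ T} := by
      have m1 : MeasurableSet {p : ℝ × (Fin n → ℝ) | 0 ≤ p.1} :=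
        measurableSet_le measurable_const measurable_fst
      have m2 : MeasurableSet {p : ℝ × (Fin n → ℝ) | ∀ i, 0 ≤ p.2 i} := by
        rw [Set.setOf_forall]
        exact MeasurableSet.iInter fun i =>
          measurableSet_le measurable_const (measurable_snd.eval)
      have m3 : MeasurableSet {p : ℝ × (Fin n → ℝ) | p.1 + ∑ i, p.2 i ≤ T} :=
        measurableSet_le
          (measurable_fst.add (Finset.measurable_sum _ fun i _ =>
            measurable_snd.eval)) measurable_const
      exact (m1.inter m2).inter m3
    have h1 : volume {x : Fin (n+1) → ℝ | (∀ i, 0 ≤ x i) ∧ ∑ i, x i ≤ T}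
        = volume {p : ℝ × (Fin n → ℝ) | (0 ≤ p.1 ∧ ∀ i, 0 ≤ p.2 i)
            ∧ p.1 + ∑ i, p.2 i ≤ T} := by
      rw [← hpre]
      exact (hmp'.measure_preimage (simplex_measurableSet (n+1) T).nullMeasurableSet).symm
    rw [h1]
    have h2 : (volume : Measure (ℝ × (Fin n → ℝ))) = (volume : Measure ℝ).prod volume := rfl
    rw [h2, Measure.prod_apply hA]
    have hslice : ∀ t : ℝ, volume (Prod.mk t ⁻¹' {p : ℝ × (Fin n → ℝ) |
        (0 ≤ p.1 ∧ ∀ i, 0 ≤ p.2 i) ∧ p.1 + ∑ i, p.2 i ≤ T})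
        = Set.indicator (Set.Icc 0 T)
            (fun t => ENNReal.ofReal ((T - t) ^ n / n.factorial)) t := by
      intro t
      by_cases ht : 0 ≤ t
      · by_cases htT : t ≤ T
        · have hset : Prod.mk t ⁻¹' {p : ℝ × (Fin n → ℝ) |
              (0 ≤ p.1 ∧ ∀ i, 0 ≤ p.2 i) ∧ p.1 + ∑ i, p.2 i ≤ T}
              = {y : Fin n → ℝ | (∀ i, 0 ≤ y i) ∧ ∑ i, y i ≤ T - t} := by
            ext y
            simp only [Set.mem_preimage, Set.mem_setOf_eq]
            constructor
            · rintro ⟨⟨-, hy⟩, hs⟩; exact ⟨hy, by linarith⟩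
            · rintro ⟨hy, hs⟩; exact ⟨⟨ht, hy⟩, by linarith⟩
          rw [hset, ih (T - t) (by linarith),
            Set.indicator_of_mem (Set.mem_Icc.mpr ⟨ht, htT⟩)]
        · have hset : Prod.mk t ⁻¹' {p : ℝ × (Fin n → ℝ) |
              (0 ≤ p.1 ∧ ∀ i, 0 ≤ p.2 i) ∧ p.1 + ∑ i, p.2 i ≤ T} = ∅ := by
            ext y
            simp only [Set.mem_preimage, Set.mem_setOf_eq, Set.mem_empty_iff_false,
              iff_false, not_and]
            rintro ⟨-, hy⟩
            have : (0:ℝ) ≤ ∑ i, y i := Finset.sum_nonneg fun i _ => hy i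
            push_neg at htT
            linarith
          rw [hset, Set.indicator_of_notMem (fun hm => htT hm.2)]
          simp
      · have hset : Prod.mk t ⁻¹' {p : ℝ × (Fin n → ℝ) |
            (0 ≤ p.1 ∧ ∀ i, 0 ≤ p.2 i) ∧ p.1 + ∑ i, p.2 i ≤ T} = ∅ := by
          ext y
          simp only [Set.mem_preimage, Set.mem_setOf_eq, Set.mem_empty_iff_false,
            iff_false, not_and]
          rintro ⟨ht', -⟩
          exact absurd ht' ht
        rw [hset, Set.indicator_of_notMem (fun hm => ht hm.1)]
        simp
    simp_rw [hslice]
    rw [lintegral_indicator measurableSet_Icc]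
    have hint : IntegrableOn (fun t : ℝ => (T - t) ^ n / n.factorial) (Set.Icc 0 T) volume := by
      apply Continuous.integrableOn_Icc
      continuity
    have hnn : 0 ≤ᵐ[volume.restrict (Set.Icc 0 T)]
        fun t : ℝ => (T - t) ^ n / n.factorial := by
      filter_upwards [ae_restrict_mem measurableSet_Icc] with t ht
      have : 0 ≤ T - t := by linarith [ht.2]
      positivity
    rw [← ofReal_integral_eq_lintegral_ofReal hint hnn]
    congr 1
    rw [MeasureTheory.integral_Icc_eq_integral_Ioc, ← intervalIntegral.integral_of_le hT]
    have hcomp : (∫ t in (0:ℝ)..T, (T - t) ^ n / n.factorial)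
        = ∫ t in (0:ℝ)..T, t ^ n / n.factorial := by
      have := intervalIntegral.integral_comp_sub_left
        (a := (0:ℝ)) (b := T) (fun s => s ^ n / n.factorial) T
      simpa using this
    rw [hcomp, intervalIntegral.integral_div, integral_pow]
    have hfac : ((n+1).factorial : ℝ) = (n+1) * n.factorial := by
      rw [Nat.factorial_succ]; push_cast; ring
    rw [hfac]
    have h1 : ((n:ℝ) + 1) ≠ 0 := by positivity
    have h2 : (n.factorial : ℝ) ≠ 0 := by positivity
    field_simp
    rw [zero_pow (Nat.succ_ne_zero n), sub_zero]

theorem volume_sublevel_le (n : ℕ) (hn : 0 < n) (b c : ℝ) (hc : 0 < c)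
    (h : 1 < b + Real.log c - Real.log n) :
    volume {x : Fin n → ℝ | (∀ i, 0 ≤ x i) ∧
        (∑ i, x i * Real.log (x i)) + b * ∑ i, x i < c} ≤
      ENNReal.ofReal
        (2 ^ n * c ^ n / (n.factorial * n * (b + Real.log c - Real.log n) ^ n)) := by
  set S := b + Real.log c - Real.log n with hSdef
  have hS1 : 1 < S := h
  have hS0 : 0 < S := lt_trans zero_lt_one hS1
  set E := Real.exp (Real.log n / n) with hEdef
  have hE0 : 0 < E := Real.exp_pos _
  have hn' : (0:ℝ) < n := by exact_mod_cast hn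
  set T := 2 * c / (S * E) with hTdef
  have hT0 : 0 < T := by positivity
  -- containment
  have hsub : {x : Fin n → ℝ | (∀ i, 0 ≤ x i) ∧
      (∑ i, x i * Real.log (x i)) + b * ∑ i, x i < c}
      ⊆ {x : Fin n → ℝ | (∀ i, 0 ≤ x i) ∧ ∑ i, x i ≤ T} := by
    rintro x ⟨hx, hlt⟩
    refine ⟨hx, ?_⟩
    by_contra hTs
    push_neg at hTs
    set s := ∑ i, x i with hsdef
    have hs0 : 0 < s := lt_trans hT0 hTs
    have hJ : s * Real.log (s / n) ≤ ∑ i, x i * Real.log (x i) := aux_jensen n hn x hx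
    have hlogTn : Real.log (T / n) + b = S + Real.log 2 - Real.log S - Real.log n / n := by
      rw [hTdef, hEdef]
      rw [div_div, Real.log_div (by positivity) (by positivity),
        Real.log_mul (by norm_num) (ne_of_gt hc),
        Real.log_mul (ne_of_gt (mul_pos hS0 hE0)) (ne_of_gt hn'),
        Real.log_mul (ne_of_gt hS0) (ne_of_gt hE0), Real.log_exp, hSdef]
      ring
    have hkey := aux_key_ineq n hn S hS1.le
    have hA0 : 0 < S + Real.log 2 - Real.log S - Real.log n / n := by nlinarith
    have hmono : Real.log (T / n) ≤ Real.log (s / n) :=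
      Real.log_le_log (by positivity) (by gcongr)
    have hTA : c ≤ T * (Real.log (T / n) + b) := by
      rw [hlogTn, hTdef]
      rw [div_mul_eq_mul_div, le_div_iff₀ (by positivity)]
      nlinarith
    have hchain : T * (Real.log (T / n) + b) ≤ s * (Real.log (s / n) + b) := by
      have h1 : Real.log (T / n) + b ≤ Real.log (s / n) + b := by linarith
      have h2 : 0 < Real.log (T / n) + b := by rw [hlogTn]; exact hA0
      nlinarith
    have hfin : s * (Real.log (s / n) + b) < c := by
      have : s * Real.log (s / n) + b * s ≤ (∑ i, x i * Real.log (x i)) + b * s := by linarith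
      nlinarith [hJ]
    linarith
  calc volume {x : Fin n → ℝ | (∀ i, 0 ≤ x i) ∧
        (∑ i, x i * Real.log (x i)) + b * ∑ i, x i < c}
      ≤ volume {x : Fin n → ℝ | (∀ i, 0 ≤ x i) ∧ ∑ i, x i ≤ T} := measure_mono hsub
    _ = ENNReal.ofReal (T ^ n / n.factorial) := simplex_vol n T hT0.le
    _ = ENNReal.ofReal (2 ^ n * c ^ n / (n.factorial * n * S ^ n)) := by
        congr 1
        have hEn : E ^ n = n := by
          rw [hEdef, ← Real.exp_nat_mul, mul_div_cancel₀ _ (ne_of_gt hn'), Real.exp_log hn']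
        rw [hTdef, div_pow, mul_pow, mul_pow, hEn]
        have h1 : (S:ℝ) ^ n ≠ 0 := by positivity
        have h2 : (n.factorial : ℝ) ≠ 0 := by positivity
        field_simp
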